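/- For every γ < 2 there exist independent identically distributed real random variables X, Y with P(|X+Y| ≤ 1.5) > γ·P(|X−Y| ≤ 1.5). Concretely, for X, Y uniform on {−2n+1, −2n+3, …, −1, 2, 4, …, 2n}, one has P(|X−Y| ≤ 1.5) = 1/(2n) and P(|X+Y| ≤ 1.5) ≥ (1/n)(1 − 1/n). -/

import Mathlib

open MeasureTheory Finset

lemma measure_apply_discrete (s : Finset ℝ) (A : Set ℝ) (hA : MeasurableSet A) :
    (((s.card : ENNReal)⁻¹ • ∑ x ∈ s, Measure.dirac x) : Measure ℝ) A
      = (s.card : ENNReal)⁻¹ * ∑ x ∈ s, A.indicator 1 x := by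
  rw [Measure.smul_apply, Measure.finset_sum_apply, smul_eq_mul]
  congr 1
  exact Finset.sum_congr rfl fun x _ => Measure.dirac_apply' x hA

lemma isProb_discrete (s : Finset ℝ) (hs : s.Nonempty) :
    IsProbabilityMeasure (((s.card : ENNReal)⁻¹ • ∑ x ∈ s, Measure.dirac x) : Measure ℝ) := by
  constructor
  rw [measure_apply_discrete s _ MeasurableSet.univ]
  simp only [Set.indicator_univ, Pi.one_apply, Finset.sum_const, nsmul_eq_mul, mul_one]
  exact ENNReal.inv_mul_cancel (by exact_mod_cast hs.card_ne_zero) (ENNReal.natCast_ne_top _)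

lemma prod_apply_discrete (s : Finset ℝ) (hs : s.Nonempty) (S : Set (ℝ × ℝ))
    (hS : MeasurableSet S)
    (μ : Measure ℝ) (hμ : μ = (s.card : ENNReal)⁻¹ • ∑ x ∈ s, Measure.dirac x) :
    (μ.prod μ) S = (s.card : ENNReal)⁻¹ * ∑ x ∈ s, ((s.card : ENNReal)⁻¹ *
      ∑ y ∈ s, S.indicator 1 (x, y)) := by
  haveI : IsProbabilityMeasure μ := hμ ▸ isProb_discrete s hs
  rw [Measure.prod_apply hS]
  have hsec : ∀ x : ℝ, μ (Prod.mk x ⁻¹' S) = (s.card : ENNReal)⁻¹ *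
      ∑ y ∈ s, S.indicator 1 (x, y) := by
    intro x
    rw [hμ, measure_apply_discrete s _ (measurable_prodMk_left hS)]
    rfl
  simp only [← hsec]
  conv_lhs => rw [hμ]
  rw [lintegral_smul_measure, lintegral_finset_sum_measure]
  congr 1
  exact Finset.sum_congr rfl fun x _ => by rw [lintegral_dirac, ← hμ]

lemma ind_diff_ff (k j : ℕ) :
    ({p : ℝ × ℝ | |p.1 - p.2| ≤ 1.5} : Set (ℝ × ℝ)).indicator 1
      (-(2*(k:ℝ)+1), -(2*(j:ℝ)+1)) = (if j = k then (1:ENNReal) else 0) := by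
  rw [Set.indicator_apply]
  simp only [Set.mem_setOf_eq]
  by_cases h : j = k
  · subst h
    rw [if_pos (by norm_num), if_pos rfl]
    rfl
  · rw [if_neg, if_neg h]
    intro hc
    rw [abs_le] at hc
    rcases Nat.lt_or_ge j k with hlt | hge
    · have : (j:ℝ) + 1 ≤ k := by exact_mod_cast hlt
      linarith [hc.2]
    · have : (k:ℝ) + 1 ≤ j := by exact_mod_cast (by omega : k + 1 ≤ j)
      linarith [hc.1]

lemma ind_diff_gg (k j : ℕ) :
    ({p : ℝ × ℝ | |p.1 - p.2| ≤ 1.5} : Set (ℝ × ℝ)).indicator 1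
      (2*((k:ℝ)+1), 2*((j:ℝ)+1)) = (if j = k then (1:ENNReal) else 0) := by
  rw [Set.indicator_apply]
  simp only [Set.mem_setOf_eq]
  by_cases h : j = k
  · subst h
    rw [if_pos (by norm_num), if_pos rfl]
    rfl
  · rw [if_neg, if_neg h]
    intro hc
    rw [abs_le] at hc
    rcases Nat.lt_or_ge j k with hlt | hge
    · have : (j:ℝ) + 1 ≤ k := by exact_mod_cast hlt
      linarith [hc.1]
    · have : (k:ℝ) + 1 ≤ j := by exact_mod_cast (by omega : k + 1 ≤ j)
      linarith [hc.2]

lemma ind_diff_fg (k j : ℕ) :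
    ({p : ℝ × ℝ | |p.1 - p.2| ≤ 1.5} : Set (ℝ × ℝ)).indicator 1
      (-(2*(k:ℝ)+1), 2*((j:ℝ)+1)) = (0:ENNReal) := by
  rw [Set.indicator_apply, if_neg]
  simp only [Set.mem_setOf_eq]
  intro hc
  rw [abs_le] at hc
  have h1 : (0:ℝ) ≤ (k:ℝ) := Nat.cast_nonneg k
  have h2 : (0:ℝ) ≤ (j:ℝ) := Nat.cast_nonneg j
  linarith [hc.1]

lemma ind_diff_gf (k j : ℕ) :
    ({p : ℝ × ℝ | |p.1 - p.2| ≤ 1.5} : Set (ℝ × ℝ)).indicator 1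
      (2*((k:ℝ)+1), -(2*(j:ℝ)+1)) = (0:ENNReal) := by
  rw [Set.indicator_apply, if_neg]
  simp only [Set.mem_setOf_eq]
  intro hc
  rw [abs_le] at hc
  have h1 : (0:ℝ) ≤ (k:ℝ) := Nat.cast_nonneg k
  have h2 : (0:ℝ) ≤ (j:ℝ) := Nat.cast_nonneg j
  linarith [hc.2]

lemma ind_sum_ff (k j : ℕ) :
    ({p : ℝ × ℝ | |p.1 + p.2| ≤ 1.5} : Set (ℝ × ℝ)).indicator 1
      (-(2*(k:ℝ)+1), -(2*(j:ℝ)+1)) = (0:ENNReal) := by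
  rw [Set.indicator_apply, if_neg]
  simp only [Set.mem_setOf_eq]
  intro hc
  rw [abs_le] at hc
  have h1 : (0:ℝ) ≤ (k:ℝ) := Nat.cast_nonneg k
  have h2 : (0:ℝ) ≤ (j:ℝ) := Nat.cast_nonneg j
  linarith [hc.1]

lemma ind_sum_gg (k j : ℕ) :
    ({p : ℝ × ℝ | |p.1 + p.2| ≤ 1.5} : Set (ℝ × ℝ)).indicator 1
      (2*((k:ℝ)+1), 2*((j:ℝ)+1)) = (0:ENNReal) := by
  rw [Set.indicator_apply, if_neg]
  simp only [Set.mem_setOf_eq]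
  intro hc
  rw [abs_le] at hc
  have h1 : (0:ℝ) ≤ (k:ℝ) := Nat.cast_nonneg k
  have h2 : (0:ℝ) ≤ (j:ℝ) := Nat.cast_nonneg j
  linarith [hc.2]

lemma ind_sum_fg (k j : ℕ) :
    ({p : ℝ × ℝ | |p.1 + p.2| ≤ 1.5} : Set (ℝ × ℝ)).indicator 1
      (-(2*(k:ℝ)+1), 2*((j:ℝ)+1))
      = (if j = k then (1:ENNReal) else 0) + (if j + 1 = k then 1 else 0) := by
  rw [Set.indicator_apply]
  simp only [Set.mem_setOf_eq]
  by_cases h1 : j = k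
  · subst h1
    rw [if_pos (by rw [show -(2*(j:ℝ)+1) + 2*((j:ℝ)+1) = 1 by ring]; norm_num),
        if_pos rfl, if_neg (by omega), add_zero]
    rfl
  · by_cases h2 : j + 1 = k
    · have hk : (k:ℝ) = (j:ℝ) + 1 := by exact_mod_cast h2.symm
      rw [if_pos (by rw [show -(2*(k:ℝ)+1) + 2*((j:ℝ)+1) = -1 by rw [hk]; ring]; norm_num),
          if_neg h1, if_pos h2, zero_add]
      rfl
    · rw [if_neg, if_neg h1, if_neg h2, add_zero]
      intro hc
      rw [abs_le] at hc
      rcases Nat.lt_or_ge j k with hlt | hge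
      · have : (j:ℝ) + 2 ≤ k := by exact_mod_cast (by omega : j + 2 ≤ k)
        linarith [hc.1]
      · have : (k:ℝ) + 1 ≤ j := by exact_mod_cast (by omega : k + 1 ≤ j)
        linarith [hc.2]

lemma ind_sum_gf (k j : ℕ) :
    ({p : ℝ × ℝ | |p.1 + p.2| ≤ 1.5} : Set (ℝ × ℝ)).indicator 1
      (2*((k:ℝ)+1), -(2*(j:ℝ)+1))
      = (if j = k then (1:ENNReal) else 0) + (if j = k + 1 then 1 else 0) := by
  rw [Set.indicator_apply]
  simp only [Set.mem_setOf_eq]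
  by_cases h1 : j = k
  · subst h1
    rw [if_pos (by rw [show 2*((j:ℝ)+1) + -(2*(j:ℝ)+1) = 1 by ring]; norm_num),
        if_pos rfl, if_neg (by omega), add_zero]
    rfl
  · by_cases h2 : j = k + 1
    · have hj : (j:ℝ) = (k:ℝ) + 1 := by exact_mod_cast h2
      rw [if_pos (by rw [show 2*((k:ℝ)+1) + -(2*(j:ℝ)+1) = -1 by rw [hj]; ring]; norm_num),
          if_neg h1, if_pos h2, zero_add]
      rfl
    · rw [if_neg, if_neg h1, if_neg h2, add_zero]
      intro hc
      rw [abs_le] at hc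
      rcases Nat.lt_or_ge j k with hlt | hge
      · have : (j:ℝ) + 1 ≤ k := by exact_mod_cast hlt
        linarith [hc.1]
      · have : (k:ℝ) + 2 ≤ j := by exact_mod_cast (by omega : k + 2 ≤ j)
        linarith [hc.2]

lemma sum_diag_enn (n : ℕ) :
    ∑ k ∈ range n, ∑ j ∈ range n, (if j = k then (1:ENNReal) else 0) = n := by
  rw [Finset.sum_congr rfl fun k hk => by rw [Finset.sum_ite_eq', if_pos hk]]
  simp

lemma sum_succeq_enn (n : ℕ) :
    ∑ k ∈ range n, ∑ j ∈ range n, (if j = k + 1 then (1:ENNReal) else 0) = (n - 1 : ℕ) := by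
  rw [Finset.sum_congr rfl fun k _ => by rw [Finset.sum_ite_eq' (range n) (k+1) (fun _ => (1:ENNReal))]]
  simp only [Finset.mem_range]
  cases n with
  | zero => simp
  | succ m =>
    rw [Finset.sum_range_succ, if_neg (by omega), add_zero,
        Finset.sum_congr rfl fun k hk => if_pos (by simpa using Finset.mem_range.mp hk)]
    simp

lemma sum_eqsucc_enn (n : ℕ) :
    ∑ k ∈ range n, ∑ j ∈ range n, (if j + 1 = k then (1:ENNReal) else 0) = (n - 1 : ℕ) := by
  rw [Finset.sum_comm]
  rw [Finset.sum_congr rfl fun j _ => by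
    rw [Finset.sum_ite_eq (range n) (j+1) (fun _ => (1:ENNReal))]]
  simp only [Finset.mem_range]
  cases n with
  | zero => simp
  | succ m =>
    rw [Finset.sum_range_succ, if_neg (by omega), add_zero,
        Finset.sum_congr rfl fun k hk => if_pos (by simpa using Finset.mem_range.mp hk)]
    simp

lemma finj : Function.Injective (fun k : ℕ => -(2 * (k : ℝ) + 1)) := by
  intro a b h
  simp only at h
  have : (a:ℝ) = b := by linarith
  exact_mod_cast this

lemma ginj : Function.Injective (fun k : ℕ => 2 * ((k : ℝ) + 1)) := by
  intro a b h
  simp only at h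
  have : (a:ℝ) = b := by linarith
  exact_mod_cast this

lemma fgdisj (n : ℕ) : Disjoint ((range n).image fun k : ℕ => -(2 * (k : ℝ) + 1))
    ((range n).image fun k : ℕ => 2 * ((k : ℝ) + 1)) := by
  rw [Finset.disjoint_left]
  rintro x hx hx'
  simp only [Finset.mem_image, Finset.mem_range] at hx hx'
  obtain ⟨a, -, rfl⟩ := hx
  obtain ⟨b, -, hb⟩ := hx'
  have h1 : (0:ℝ) ≤ (a:ℝ) := Nat.cast_nonneg a
  have h2 : (0:ℝ) ≤ (b:ℝ) := Nat.cast_nonneg b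
  linarith

lemma card_s (n : ℕ) (s : Finset ℝ)
    (hs : s = ((range n).image fun k : ℕ => -(2 * (k : ℝ) + 1)) ∪
            ((range n).image fun k : ℕ => 2 * ((k : ℝ) + 1))) :
    s.card = 2 * n := by
  rw [hs, Finset.card_union_of_disjoint (fgdisj n),
      Finset.card_image_of_injective _ finj, Finset.card_image_of_injective _ ginj,
      Finset.card_range]
  omega

lemma part2 (n : ℕ) (hn : 2 ≤ n) (s : Finset ℝ)
    (hs : s = ((range n).image fun k : ℕ => -(2 * (k : ℝ) + 1)) ∪
            ((range n).image fun k : ℕ => 2 * ((k : ℝ) + 1)))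
    (μ : Measure ℝ) (hμ : μ = (s.card : ENNReal)⁻¹ • ∑ x ∈ s, Measure.dirac x) :
    (μ.prod μ) {p : ℝ × ℝ | |p.1 - p.2| ≤ 1.5} = (2 * (n : ENNReal))⁻¹ ∧
    ENNReal.ofReal ((1 / n) * (1 - 1 / n)) ≤
      (μ.prod μ) {p : ℝ × ℝ | |p.1 + p.2| ≤ 1.5} := by
  have hcard := card_s n s hs
  have hne : s.Nonempty := Finset.card_pos.mp (by omega)
  have hfinj' : ∀ x ∈ range n, ∀ y ∈ range n,
      (fun k : ℕ => -(2 * (k : ℝ) + 1)) x = (fun k : ℕ => -(2 * (k : ℝ) + 1)) y → x = y :=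
    fun a _ b _ h => finj h
  have hginj' : ∀ x ∈ range n, ∀ y ∈ range n,
      (fun k : ℕ => 2 * ((k : ℝ) + 1)) x = (fun k : ℕ => 2 * ((k : ℝ) + 1)) y → x = y :=
    fun a _ b _ h => ginj h
  have key : ∀ S : Set (ℝ × ℝ), MeasurableSet S →
      (μ.prod μ) S = ((2*n:ℕ) : ENNReal)⁻¹ * ((∑ k ∈ range n, ((2*n:ℕ):ENNReal)⁻¹ *
        ((∑ j ∈ range n, S.indicator 1 (-(2*(k:ℝ)+1), -(2*(j:ℝ)+1))) +
         (∑ j ∈ range n, S.indicator 1 (-(2*(k:ℝ)+1), 2*((j:ℝ)+1))))) +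
        (∑ k ∈ range n, ((2*n:ℕ):ENNReal)⁻¹ *
        ((∑ j ∈ range n, S.indicator 1 (2*((k:ℝ)+1), -(2*(j:ℝ)+1))) +
         (∑ j ∈ range n, S.indicator 1 (2*((k:ℝ)+1), 2*((j:ℝ)+1)))))) := by
    intro S hS
    rw [prod_apply_discrete s hne S hS μ hμ, hcard]
    conv_lhs => rw [hs]
    simp only [Finset.sum_union (fgdisj n), Finset.sum_image hfinj',
      Finset.sum_image hginj']
  have hn0 : n ≠ 0 := by omega
  have h2n0 : (2 * (n : ENNReal)) ≠ 0 :=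
    mul_ne_zero two_ne_zero (Nat.cast_ne_zero.mpr hn0)
  have h2ntop : (2 * (n : ENNReal)) ≠ ⊤ :=
    ENNReal.mul_ne_top (by simp) (ENNReal.natCast_ne_top n)
  have hc2n : ((2*n:ℕ) : ENNReal) = 2 * (n : ENNReal) := by push_cast; ring
  constructor
  · rw [key {p : ℝ × ℝ | |p.1 - p.2| ≤ 1.5} (measurableSet_le ((measurable_fst.sub measurable_snd).abs) measurable_const)]
    simp only [ind_diff_ff, ind_diff_fg, ind_diff_gf, ind_diff_gg,
      Finset.sum_const_zero, add_zero, zero_add, ← Finset.mul_sum]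
    rw [sum_diag_enn, hc2n, ← mul_add, ← two_mul, ENNReal.inv_mul_cancel h2n0 h2ntop, mul_one]
  · rw [key {p : ℝ × ℝ | |p.1 + p.2| ≤ 1.5} (measurableSet_le ((measurable_fst.add measurable_snd).abs) measurable_const)]
    simp only [ind_sum_ff, ind_sum_fg, ind_sum_gf, ind_sum_gg,
      Finset.sum_const_zero, add_zero, zero_add, Finset.sum_add_distrib, ← Finset.mul_sum]
    rw [sum_diag_enn, sum_eqsucc_enn, sum_succeq_enn]
    have hadd : ((n : ENNReal) + ((n-1:ℕ) : ENNReal)) ≠ ⊤ :=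
      ENNReal.add_ne_top.mpr ⟨ENNReal.natCast_ne_top _, ENNReal.natCast_ne_top _⟩
    have hterm : ((2*n:ℕ) : ENNReal)⁻¹ * ((n : ENNReal) + ((n-1:ℕ) : ENNReal)) ≠ ⊤ :=
      ENNReal.mul_ne_top (ENNReal.inv_ne_top.mpr (Nat.cast_ne_zero.mpr (by omega))) hadd
    have hfin : ((2*n:ℕ) : ENNReal)⁻¹ * (((2*n:ℕ) : ENNReal)⁻¹ * ((n : ENNReal) + ((n-1:ℕ) : ENNReal)) +
        ((2*n:ℕ) : ENNReal)⁻¹ * ((n : ENNReal) + ((n-1:ℕ) : ENNReal))) ≠ ⊤ :=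
      ENNReal.mul_ne_top (ENNReal.inv_ne_top.mpr (Nat.cast_ne_zero.mpr (by omega)))
        (ENNReal.add_ne_top.mpr ⟨hterm, hterm⟩)
    rw [ENNReal.ofReal_le_iff_le_toReal hfin]
    rw [ENNReal.toReal_mul, ENNReal.toReal_add hterm hterm,
        ENNReal.toReal_mul, ENNReal.toReal_add (ENNReal.natCast_ne_top _) (ENNReal.natCast_ne_top _),
        ENNReal.toReal_inv, ENNReal.toReal_natCast, ENNReal.toReal_natCast, ENNReal.toReal_natCast]
    have hr2 : (2:ℝ) ≤ (n:ℝ) := by exact_mod_cast hn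
    have hr0 : (0:ℝ) < (n:ℝ) := by linarith
    have hr0' : (n:ℝ) ≠ 0 := ne_of_gt hr0
    have hn1 : ((n-1:ℕ):ℝ) = (n:ℝ) - 1 := by
      rw [Nat.cast_sub (by omega)]; norm_num
    have h2n' : ((2*n:ℕ):ℝ) = 2*(n:ℝ) := by push_cast; ring
    rw [hn1, h2n',
        show (2*(n:ℝ))⁻¹ * ((2*(n:ℝ))⁻¹ * ((n:ℝ) + ((n:ℝ)-1)) + (2*(n:ℝ))⁻¹ * ((n:ℝ) + ((n:ℝ)-1)))
          = (2*(n:ℝ)-1)/(2*(n:ℝ)^2) by field_simp; ring,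
        show (1/(n:ℝ))*(1-1/(n:ℝ)) = ((n:ℝ)-1)/((n:ℝ)^2) by field_simp,
        div_le_div_iff₀ (by nlinarith) (by nlinarith)]
    nlinarith

theorem stmt_15 (γ : ℝ) (hγ : γ < 2) :
    (∃ μ : Measure ℝ, IsProbabilityMeasure μ ∧
      ENNReal.ofReal γ * (μ.prod μ) {p : ℝ × ℝ | |p.1 - p.2| ≤ 1.5} <
        (μ.prod μ) {p : ℝ × ℝ | |p.1 + p.2| ≤ 1.5}) ∧
    ∀ n : ℕ, 2 ≤ n →
      ∀ s : Finset ℝ,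
        s = ((range n).image fun k : ℕ => -(2 * (k : ℝ) + 1)) ∪
            ((range n).image fun k : ℕ => 2 * ((k : ℝ) + 1)) →
      ∀ μ : Measure ℝ,
        μ = (s.card : ENNReal)⁻¹ • ∑ x ∈ s, Measure.dirac x →
        (μ.prod μ) {p : ℝ × ℝ | |p.1 - p.2| ≤ 1.5} = (2 * (n : ENNReal))⁻¹ ∧
        ENNReal.ofReal ((1 / n) * (1 - 1 / n)) ≤
          (μ.prod μ) {p : ℝ × ℝ | |p.1 + p.2| ≤ 1.5} := by
  constructor
  · have hn2 : 2 ≤ ⌈2/(2-γ)⌉₊ + 2 := by omega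
    set n : ℕ := ⌈2/(2-γ)⌉₊ + 2 with hndef
    set s : Finset ℝ := ((range n).image fun k : ℕ => -(2 * (k : ℝ) + 1)) ∪
            ((range n).image fun k : ℕ => 2 * ((k : ℝ) + 1)) with hsdef
    have hcard := card_s n s hsdef
    have hne : s.Nonempty := Finset.card_pos.mp (by omega)
    refine ⟨(s.card : ENNReal)⁻¹ • ∑ x ∈ s, Measure.dirac x, isProb_discrete s hne, ?_⟩
    obtain ⟨h1, h2⟩ := part2 n hn2 s hsdef _ rfl
    rw [h1]
    refine lt_of_lt_of_le ?_ h2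
    have hγ2 : (0:ℝ) < 2 - γ := by linarith
    have hr2 : (2:ℝ) ≤ (n:ℝ) := by exact_mod_cast hn2
    have hr0 : (0:ℝ) < (n:ℝ) := by linarith
    have hr0' : (n:ℝ) ≠ 0 := ne_of_gt hr0
    have hnr : 2/(2-γ) < (n:ℝ) := by
      calc 2/(2-γ) ≤ (⌈2/(2-γ)⌉₊ : ℝ) := Nat.le_ceil _
        _ < (n:ℝ) := by exact_mod_cast (by omega : ⌈2/(2-γ)⌉₊ < n)
    have hkey : γ * (2*(n:ℝ))⁻¹ < (1/(n:ℝ))*(1-1/(n:ℝ)) := by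
      have h2' : 2 < (n:ℝ)*(2-γ) := (div_lt_iff₀ hγ2).mp hnr
      rw [show γ * (2*(n:ℝ))⁻¹ = γ/(2*(n:ℝ)) by ring,
          show (1/(n:ℝ))*(1-1/(n:ℝ)) = ((n:ℝ)-1)/((n:ℝ)^2) by field_simp,
          div_lt_div_iff₀ (by linarith) (by positivity)]
      nlinarith
    have hposR : (0:ℝ) < (1/(n:ℝ))*(1-1/(n:ℝ)) := by
      have h1n : 1/(n:ℝ) < 1 := by rw [div_lt_one hr0]; linarith
      have hp : (0:ℝ) < 1/(n:ℝ) := by positivity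
      nlinarith
    rcases le_or_gt γ 0 with h | h
    · rw [ENNReal.ofReal_eq_zero.mpr h, zero_mul]
      exact ENNReal.ofReal_pos.mpr hposR
    · have hinv : (2*(n:ENNReal))⁻¹ = ENNReal.ofReal ((2*(n:ℝ))⁻¹) := by
        rw [ENNReal.ofReal_inv_of_pos (by linarith)]
        congr 1
        rw [ENNReal.ofReal_mul (by norm_num), ENNReal.ofReal_natCast]
        norm_num
      rw [hinv, ← ENNReal.ofReal_mul h.le]
      exact (ENNReal.ofReal_lt_ofReal_iff hposR).mpr hkey
  · intro n hn s hs μ hμ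
    exact part2 n hn s hs μ hμ
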